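/- Let M : A × A → ℕ be a matrix with M_{j,k} ≥ 1 for at least one k for each j (so that τ_j(g) = Σ_k M_{j,k} g_k ∈ ℍ for g ∈ ℍ^A). Then the linear map τ : ℍ^A → ℍ^A is a quasicontraction: for all g, h ∈ ℍ^A, max_j γ(τ_j(g), τ_j(h)) ≤ max_j γ(g_j, h_j), where γ(a,b) = |a-b|²/(Im a · Im b). -/

import Mathlib

open Complex

/-- `γ(a,b) = |a-b|² / (Im a · Im b)` on the upper half-plane. -/
noncomputable def gam (a b : ℂ) : ℝ := (‖a - b‖)^2 / (a.im * b.im)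

/-- The linear map `τ_j(g) = Σ_k M_{j,k} g_k` is a quasicontraction for
`γ_A(g,h) = max_j γ(g_j,h_j)` on `ℍ^A`, provided each row of `M` has a nonzero entry. -/
theorem tau_quasicontraction {A : Type*} [Fintype A] [Nonempty A] (M : A → A → ℕ)
    (hM : ∀ j, 1 ≤ ∑ k, M j k) (g h : A → ℂ)
    (hg : ∀ j, 0 < (g j).im) (hh : ∀ j, 0 < (h j).im) :
    Finset.univ.sup' Finset.univ_nonempty
        (fun j => gam (∑ k, (M j k : ℂ) * g k) (∑ k, (M j k : ℂ) * h k)) ≤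
      Finset.univ.sup' Finset.univ_nonempty (fun j => gam (g j) (h j)) := by
  set Γ := Finset.univ.sup' Finset.univ_nonempty (fun j => gam (g j) (h j)) with hΓdef
  have hkey : ∀ k, gam (g k) (h k) ≤ Γ := fun k =>
    Finset.le_sup' (fun j => gam (g j) (h j)) (Finset.mem_univ k)
  have hΓ0 : 0 ≤ Γ := by
    obtain ⟨k⟩ := ‹Nonempty A›
    refine le_trans ?_ (hkey k)
    unfold gam
    exact div_nonneg (sq_nonneg _) (mul_nonneg (hg k).le (hh k).le)
  apply Finset.sup'_le
  intro j _
  set m : A → ℝ := fun k => (M j k : ℝ) with hm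
  have hm0 : ∀ k, 0 ≤ m k := fun k => Nat.cast_nonneg _
  -- imaginary parts of the sums
  have himg : (∑ k, (M j k : ℂ) * g k).im = ∑ k, m k * (g k).im := by
    rw [Complex.im_sum]; congr 1; ext k; simp [hm]
  have himh : (∑ k, (M j k : ℂ) * h k).im = ∑ k, m k * (h k).im := by
    rw [Complex.im_sum]; congr 1; ext k; simp [hm]
  -- positivity of the new imaginary parts
  obtain ⟨k0, _, hk0⟩ : ∃ k ∈ Finset.univ, M j k ≠ 0 := by
    by_contra hc
    push_neg at hc
    have : (∑ k, M j k) = 0 := Finset.sum_eq_zero fun k hk => hc k hk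
    have h1 := hM j
    omega
  have hS1 : 0 < ∑ k, m k * (g k).im := by
    refine Finset.sum_pos' (fun k _ => mul_nonneg (hm0 k) (hg k).le) ⟨k0, Finset.mem_univ k0, ?_⟩
    have : 0 < m k0 := by simp [hm]; omega
    exact mul_pos this (hg k0)
  have hS2 : 0 < ∑ k, m k * (h k).im := by
    refine Finset.sum_pos' (fun k _ => mul_nonneg (hm0 k) (hh k).le) ⟨k0, Finset.mem_univ k0, ?_⟩
    have : 0 < m k0 := by simp [hm]; omega
    exact mul_pos this (hh k0)
  -- pointwise bound on |g k - h k|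
  have habs : ∀ k, ‖g k - h k‖
      ≤ Real.sqrt Γ * (Real.sqrt ((g k).im) * Real.sqrt ((h k).im)) := by
    intro k
    have hsq : (‖g k - h k‖)^2 ≤ Γ * ((g k).im * (h k).im) := by
      have := hkey k
      unfold gam at this
      rw [div_le_iff₀ (mul_pos (hg k) (hh k))] at this
      linarith
    calc ‖g k - h k‖ = Real.sqrt ((‖g k - h k‖)^2) := by
          rw [Real.sqrt_sq (norm_nonneg _)]
      _ ≤ Real.sqrt (Γ * ((g k).im * (h k).im)) := Real.sqrt_le_sqrt hsq
      _ = Real.sqrt Γ * (Real.sqrt ((g k).im) * Real.sqrt ((h k).im)) := by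
          rw [Real.sqrt_mul hΓ0, Real.sqrt_mul (hg k).le]
  -- triangle inequality
  have htri : ‖(∑ k, (M j k : ℂ) * g k) - ∑ k, (M j k : ℂ) * h k‖
      ≤ ∑ k, m k * ‖g k - h k‖ := by
    rw [← Finset.sum_sub_distrib]
    refine le_trans (norm_sum_le _ _) (le_of_eq ?_)
    congr 1; ext k
    rw [← mul_sub, norm_mul]
    simp [hm]
  -- Cauchy-Schwarz step
  have hCS : (∑ k, m k * (Real.sqrt ((g k).im) * Real.sqrt ((h k).im)))^2
      ≤ (∑ k, m k * (g k).im) * (∑ k, m k * (h k).im) := by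
    have := Finset.sum_mul_sq_le_sq_mul_sq Finset.univ
      (fun k => Real.sqrt (m k) * Real.sqrt ((g k).im))
      (fun k => Real.sqrt (m k) * Real.sqrt ((h k).im))
    have e1 : ∀ k : A, Real.sqrt (m k) * Real.sqrt ((g k).im) *
        (Real.sqrt (m k) * Real.sqrt ((h k).im))
        = m k * (Real.sqrt ((g k).im) * Real.sqrt ((h k).im)) := by
      intro k
      rw [show Real.sqrt (m k) * Real.sqrt ((g k).im) * (Real.sqrt (m k) * Real.sqrt ((h k).im))
        = (Real.sqrt (m k) * Real.sqrt (m k)) * (Real.sqrt ((g k).im) * Real.sqrt ((h k).im)) by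
          ring, Real.mul_self_sqrt (hm0 k)]
    have e2 : ∀ k : A, (Real.sqrt (m k) * Real.sqrt ((g k).im))^2 = m k * (g k).im := by
      intro k
      rw [mul_pow, Real.sq_sqrt (hm0 k), Real.sq_sqrt (hg k).le]
    have e3 : ∀ k : A, (Real.sqrt (m k) * Real.sqrt ((h k).im))^2 = m k * (h k).im := by
      intro k
      rw [mul_pow, Real.sq_sqrt (hm0 k), Real.sq_sqrt (hh k).le]
    simp_rw [e1, e2, e3] at this
    exact this
  -- combine
  set T := ∑ k, m k * (Real.sqrt ((g k).im) * Real.sqrt ((h k).im)) with hT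
  have hT0 : 0 ≤ T := Finset.sum_nonneg fun k _ =>
    mul_nonneg (hm0 k) (mul_nonneg (Real.sqrt_nonneg _) (Real.sqrt_nonneg _))
  have hbd : ‖(∑ k, (M j k : ℂ) * g k) - ∑ k, (M j k : ℂ) * h k‖
      ≤ Real.sqrt Γ * T := by
    refine htri.trans ?_
    rw [hT, Finset.mul_sum]
    refine Finset.sum_le_sum fun k _ => ?_
    calc m k * ‖g k - h k‖
        ≤ m k * (Real.sqrt Γ * (Real.sqrt ((g k).im) * Real.sqrt ((h k).im))) :=
          mul_le_mul_of_nonneg_left (habs k) (hm0 k)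
      _ = Real.sqrt Γ * (m k * (Real.sqrt ((g k).im) * Real.sqrt ((h k).im))) := by ring
  have habs2 : (‖(∑ k, (M j k : ℂ) * g k) - ∑ k, (M j k : ℂ) * h k‖)^2
      ≤ Γ * ((∑ k, m k * (g k).im) * (∑ k, m k * (h k).im)) := by
    calc (‖(∑ k, (M j k : ℂ) * g k) - ∑ k, (M j k : ℂ) * h k‖)^2
        ≤ (Real.sqrt Γ * T)^2 := by
          apply sq_le_sq' _ hbd
          linarith [norm_nonneg ((∑ k, (M j k : ℂ) * g k) - ∑ k, (M j k : ℂ) * h k),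
            mul_nonneg (Real.sqrt_nonneg Γ) hT0]
      _ = Γ * T^2 := by rw [mul_pow, Real.sq_sqrt hΓ0]
      _ ≤ Γ * ((∑ k, m k * (g k).im) * (∑ k, m k * (h k).im)) :=
          mul_le_mul_of_nonneg_left hCS hΓ0
  show gam _ _ ≤ Γ
  unfold gam
  rw [himg, himh, div_le_iff₀ (by positivity)]
  linarith
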